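/- Let T be the complete q-ary tree of depth d (q ≥ 2, d ≥ 1) and let S ⊆ V(T). If there exists U ⊆ V(T) with U < S, then S contains a swappable pair; moreover, there is a swappable pair u, v in some level i of S such that every level j < i of S is left-ordered, and the treeswap S' of S between u and v satisfies S' < S. -/

import Mathlib

open scoped Classical

/-- A vertex of the complete `q`-ary tree of depth `d`: a sequence over `Fin q`
of length at most `d`. -/
def QV (q d : ℕ) : Type := {l : List (Fin q) // l.length ≤ d}

instance (q d : ℕ) : Finite (QV q d) :=
  (List.finite_length_le (Fin q) d).to_subtype

/-- The complete `q`-ary tree of depth `d`: two vertices are adjacent exactly when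
one is obtained from the other by appending a single element. -/
def qTree (q d : ℕ) : SimpleGraph (QV q d) where
  Adj u v := (∃ a : Fin q, v.val = u.val ++ [a]) ∨ (∃ a : Fin q, u.val = v.val ++ [a])
  symm := by constructor; intro u v h; tauto
  loopless := by
    constructor
    rintro u (⟨a, ha⟩ | ⟨a, ha⟩) <;>
    · have := congrArg List.length ha
      simp at this

/-- The vertex border `δ(S)`: vertices outside `S` with a neighbour in `S`. -/
def vertexBorder {V : Type*} (G : SimpleGraph V) (S : Set V) : Set V :=
  {v | v ∉ S ∧ ∃ u ∈ S, G.Adj u v}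

/-- `Φ_V(G, s)`: the minimum border size over vertex sets of size `s`. -/
noncomputable def isoProfile {V : Type*} (G : SimpleGraph V) (s : ℕ) : ℕ :=
  sInf ((fun S => (vertexBorder G S).ncard) '' {S : Set V | S.ncard = s})

/-- `Φ_V(G)`: the vertex-isoperimetric peak, `max_{0 ≤ s ≤ |V|} Φ_V(G, s)`. -/
noncomputable def isoPeak {V : Type*} (G : SimpleGraph V) : ℕ :=
  sSup (isoProfile G '' Set.Icc 0 (Nat.card V))

/-- The vertex separation number: for each linear layout (a bijection from the
vertices to `{1, …, |V|}`, here modelled as `V ≃ Fin |V|`) take the maximum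
border size of its prefix sets, then minimize over layouts. -/
noncomputable def vsNum {V : Type*} (G : SimpleGraph V) : ℕ :=
  sInf {n | ∃ L : V ≃ Fin (Nat.card V),
    n = sSup {m | ∃ i : Fin (Nat.card V),
      m = (vertexBorder G {u | (L u : ℕ) ≤ (i : ℕ)}).ncard}}

namespace QV

variable {q d : ℕ}

/-- Level `i`: vertices at distance `i` from the root. -/
def level (q d : ℕ) (i : ℕ) : Set (QV q d) := {w | w.val.length = i}

/-- Descendants of `u` (including `u` itself). -/
def desc (u : QV q d) : Set (QV q d) := {w | u.val <+: w.val}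

/-- `w` is a child of `u`. -/
def IsChildOf (w u : QV q d) : Prop := ∃ a : Fin q, w.val = u.val ++ [a]

/-- `u` is to the left of `v`: same level and lexicographically smaller. -/
def LeftOf (u v : QV q d) : Prop :=
  u.val.length = v.val.length ∧ List.Lex (· < ·) u.val v.val

/-- `u` precedes `v` in the breadth-first ordering of the tree. -/
def Precedes (u v : QV q d) : Prop :=
  u.val.length < v.val.length ∨
    (u.val.length = v.val.length ∧ List.Lex (· < ·) u.val v.val)

/-- `u, v` are swappable in `S`. -/
def Swappable (S : Set (QV q d)) (u v : QV q d) : Prop :=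
  LeftOf u v ∧ ((u ∉ S ∧ v ∈ S) ∨
    (u ∉ S ∧ v ∉ S ∧ (∀ w, IsChildOf w u → w ∉ S) ∧ (∃ w, IsChildOf w v ∧ w ∈ S)))

/-- Level `i` of `S` is left-ordered: no swappable pair in level `i`. -/
def LevelLeftOrdered (S : Set (QV q d)) (i : ℕ) : Prop :=
  ∀ u v : QV q d, u.val.length = i → ¬ Swappable S u v

/-- `S` is left-ordered: every level is left-ordered. -/
def LeftOrdered (S : Set (QV q d)) : Prop := ∀ i, LevelLeftOrdered S i

/-- The canonical map used in a treeswap between `u` and `v`: a descendant of `u`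
is sent to the corresponding descendant of `v` (same suffix), and vice versa;
other vertices are fixed. -/
noncomputable def swapAt (u v w : QV q d) : QV q d :=
  if h : u.val <+: w.val ∧ (v.val ++ w.val.drop u.val.length).length ≤ d then
    ⟨v.val ++ w.val.drop u.val.length, h.2⟩
  else if h' : v.val <+: w.val ∧ (u.val ++ w.val.drop v.val.length).length ≤ d then
    ⟨u.val ++ w.val.drop v.val.length, h'.2⟩
  else w

/-- The treeswap of `S` between `u` and `v`. -/
noncomputable def treeswap (S : Set (QV q d)) (u v : QV q d) : Set (QV q d) :=
  {w | swapAt u v w ∈ S}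

/-- The strict partial order `A < B` on subsets of the tree. -/
def SetPrec (A B : Set (QV q d)) : Prop :=
  (∀ i, (A ∩ level q d i).ncard = (B ∩ level q d i).ncard) ∧
  ∃ v, v ∈ A ∧ v ∉ B ∧ ∀ w, Precedes w v → (w ∈ A ↔ w ∈ B)

/-- `S` is down-compressed. -/
def DownCompressed (S : Set (QV q d)) : Prop :=
  ∀ u ∈ S, ∀ v ∉ S,
    (vertexBorder (qTree q d) S).ncard ≤
      (vertexBorder (qTree q d) ((S ∪ {v}) \ {u})).ncard ∧
    (u.val.length < v.val.length →
      (vertexBorder (qTree q d) S).ncard <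
        (vertexBorder (qTree q d) ((S ∪ {v}) \ {u})).ncard)

/-- `S'` is an aeolian compression of `S`. -/
def IsAeolianCompression (S S' : Set (QV q d)) : Prop :=
  ∃ u v : QV q d, LeftOf u v ∧
    ∃ R A : Set (QV q d), R.Nonempty ∧ R ⊆ S ∧ R ⊆ desc v ∧
      A ⊆ desc u ∧ Disjoint A S ∧ A.ncard = R.ncard ∧
      S' = (S \ R) ∪ A ∧
      S'.ncard = S.ncard ∧
      (vertexBorder (qTree q d) S').ncard ≤ (vertexBorder (qTree q d) S).ncard

/-- `S` is aeolian-compressed. -/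
def AeolianCompressed (S : Set (QV q d)) : Prop :=
  LeftOrdered S ∧ DownCompressed S ∧ ∀ S', ¬ IsAeolianCompression S S'

section Aux
open List

lemma lex_append_same {α : Type*} [LinearOrder α] (l : List α) (a b : α) :
    List.Lex (· < ·) (l ++ [a]) (l ++ [b]) ↔ a < b := by
  induction l with
  | nil => exact List.lex_singleton_iff a b
  | cons c l ih => simpa [List.cons_append, List.lex_cons_iff] using ih

lemma lex_append_of_lex {α : Type*} [LinearOrder α] :
    ∀ {l₁ l₂ : List α}, List.Lex (· < ·) l₁ l₂ → l₁.length = l₂.length →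
      ∀ t₁ t₂ : List α, List.Lex (· < ·) (l₁ ++ t₁) (l₂ ++ t₂) := by
  intro l₁ l₂ h
  induction h with
  | nil => intro hl; simp at hl
  | @rel a l₁ b l₂ hab => intro _ t₁ t₂; exact List.Lex.rel hab
  | @cons a l₁ l₂ h ih =>
      intro hl t₁ t₂
      exact List.Lex.cons (ih (by simpa using hl) t₁ t₂)


lemma swapAt_val_of_left (u v : QV q d) (hlen : u.val.length = v.val.length)
    (w : QV q d) (h : u.val <+: w.val) :
    (swapAt u v w).val = v.val ++ w.val.drop u.val.length := by
  obtain ⟨t, ht⟩ := h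
  have hlenle : (v.val ++ (w.val.drop u.val.length)).length ≤ d := by
    have := w.2
    rw [← ht, List.drop_left]
    simp only [List.length_append]
    rw [← ht] at this
    simp only [List.length_append] at this
    omega
  exact congrArg Subtype.val (dif_pos ⟨⟨t, ht⟩, hlenle⟩ : swapAt u v w = (⟨v.val ++ w.val.drop u.val.length, hlenle⟩ : QV q d))

lemma swapAt_val_of_right (u v : QV q d) (hlen : u.val.length = v.val.length)
    (hne : u.val ≠ v.val) (w : QV q d) (h : v.val <+: w.val) :
    (swapAt u v w).val = u.val ++ w.val.drop v.val.length := by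
  obtain ⟨t, ht⟩ := h
  have hnu : ¬ u.val <+: w.val := by
    intro hu
    apply hne
    have h1 : u.val = w.val.take u.val.length := List.prefix_iff_eq_take.mp hu
    have h2 : v.val = w.val.take v.val.length := List.prefix_iff_eq_take.mp ⟨t, ht⟩
    rw [h1, h2, hlen]
  have hlenle : (u.val ++ (w.val.drop v.val.length)).length ≤ d := by
    have := w.2
    rw [← ht, List.drop_left]
    simp only [List.length_append]
    rw [← ht] at this
    simp only [List.length_append] at this
    omega
  exact congrArg Subtype.val ((dif_neg (fun hc => hnu hc.1)).trans (dif_pos ⟨⟨t, ht⟩, hlenle⟩) : swapAt u v w = (⟨u.val ++ w.val.drop v.val.length, hlenle⟩ : QV q d))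

lemma swapAt_of_neither (u v : QV q d) (w : QV q d)
    (h1 : ¬ u.val <+: w.val) (h2 : ¬ v.val <+: w.val) : swapAt u v w = w := by
  exact (dif_neg (fun hc => h1 hc.1)).trans (dif_neg (fun hc => h2 hc.1))

lemma swapAt_length (u v : QV q d) (hlen : u.val.length = v.val.length)
    (hne : u.val ≠ v.val) (w : QV q d) :
    (swapAt u v w).val.length = w.val.length := by
  by_cases h1 : u.val <+: w.val
  · rw [swapAt_val_of_left u v hlen w h1]
    obtain ⟨t, ht⟩ := h1
    rw [← ht, List.drop_left]
    simp [List.length_append, hlen]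
  · by_cases h2 : v.val <+: w.val
    · rw [swapAt_val_of_right u v hlen hne w h2]
      obtain ⟨t, ht⟩ := h2
      rw [← ht, List.drop_left]
      simp [List.length_append, hlen]
    · rw [swapAt_of_neither u v w h1 h2]

lemma swapAt_involutive (u v : QV q d) (hlen : u.val.length = v.val.length)
    (hne : u.val ≠ v.val) : Function.Involutive (swapAt u v) := by
  intro w
  by_cases h1 : u.val <+: w.val
  · obtain ⟨t, ht⟩ := h1
    have hv1 : (swapAt u v w).val = v.val ++ t := by
      rw [swapAt_val_of_left u v hlen w ⟨t, ht⟩, ← ht, List.drop_left]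
    apply Subtype.ext
    rw [swapAt_val_of_right u v hlen hne _ (by rw [hv1]; exact ⟨t, rfl⟩), hv1,
      List.drop_left, ht]
  · by_cases h2 : v.val <+: w.val
    · obtain ⟨t, ht⟩ := h2
      have hv1 : (swapAt u v w).val = u.val ++ t := by
        rw [swapAt_val_of_right u v hlen hne w ⟨t, ht⟩, ← ht, List.drop_left]
      apply Subtype.ext
      rw [swapAt_val_of_left u v hlen _ (by rw [hv1]; exact ⟨t, rfl⟩), hv1,
        List.drop_left, ht]
    · rw [swapAt_of_neither u v w h1 h2, swapAt_of_neither u v w h1 h2]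

lemma mem_treeswap {S : Set (QV q d)} {u v w : QV q d} :
    w ∈ treeswap S u v ↔ swapAt u v w ∈ S := Iff.rfl

lemma treeswap_ncard_level (S : Set (QV q d)) (u v : QV q d)
    (hlen : u.val.length = v.val.length) (hne : u.val ≠ v.val) (i : ℕ) :
    ((treeswap S u v) ∩ level q d i).ncard = (S ∩ level q d i).ncard := by
  have hinv := swapAt_involutive u v hlen hne
  have heq : treeswap S u v ∩ level q d i = (swapAt u v) '' (S ∩ level q d i) := by
    ext w
    constructor
    · rintro ⟨hw1, hw2⟩
      exact ⟨swapAt u v w, ⟨hw1, by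
        show (swapAt u v w).val.length = i
        rw [swapAt_length u v hlen hne w]; exact hw2⟩, hinv w⟩
    · rintro ⟨x, ⟨hx1, hx2⟩, rfl⟩
      refine ⟨by rw [mem_treeswap, hinv x]; exact hx1, ?_⟩
      show (swapAt u v x).val.length = i
      rw [swapAt_length u v hlen hne x]; exact hx2
  rw [heq, Set.ncard_image_of_injective _ hinv.injective]

end Aux
section Main
variable {q d : ℕ}

lemma lex_asymm {l₁ l₂ : List (Fin q)} (h1 : List.Lex (· < ·) l₁ l₂)
    (h2 : List.Lex (· < ·) l₂ l₁) : False :=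
  asymm_of (List.Lex (· < ·)) h1 h2

lemma lex_irrefl {l : List (Fin q)} (h : List.Lex (· < ·) l l) : False :=
  lex_asymm h h

lemma setPrec_treeswap (S : Set (QV q d)) (u v : QV q d) (h : Swappable S u v) :
    SetPrec (treeswap S u v) S := by
  obtain ⟨⟨hlen, hlex⟩, hcase⟩ := h
  have hne : u.val ≠ v.val := fun e => lex_irrefl (e ▸ hlex)
  refine ⟨treeswap_ncard_level S u v hlen hne, ?_⟩
  rcases hcase with ⟨huS, hvS⟩ | ⟨huS, hvS, hchu, w0, ⟨a0, hw0⟩, hw0S⟩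
  · -- case (i): witness u
    have hsuv : swapAt u v u = v := by
      apply Subtype.ext
      rw [swapAt_val_of_left u v hlen u (List.prefix_refl _)]
      simp
    refine ⟨u, ?_, huS, ?_⟩
    · rw [mem_treeswap, hsuv]; exact hvS
    · intro w hw
      rw [mem_treeswap, swapAt_of_neither u v w ?_ ?_]
      · intro hdu
        rcases hw with hw | ⟨hw1, hw2⟩
        · exact absurd hdu.length_le (by omega)
        · exact lex_irrefl ((hdu.eq_of_length hw1.symm) ▸ hw2)
      · intro hdv
        rcases hw with hw | ⟨hw1, hw2⟩
        · exact absurd hdv.length_le (by omega)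
        · exact lex_asymm hlex ((hdv.eq_of_length (by omega)) ▸ hw2)
  · -- case (ii)
    have hd1 : v.val.length + 1 ≤ d := by
      have := w0.2
      rw [hw0] at this
      simpa using this
    -- children of v
    set P : Fin q → Prop := fun a =>
      (⟨v.val ++ [a], by simpa using hd1⟩ : QV q d) ∈ S with hP
    have hPa0 : P a0 := by
      show _ ∈ S
      convert hw0S using 1
      have e : (⟨v.val ++ [a0], by simpa using hd1⟩ : QV q d) = w0 := by
        apply Subtype.ext; exact hw0.symm
      rw [e]
    classical
    have hTne : (Finset.univ.filter P).Nonempty := ⟨a0, by simp [hPa0]⟩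
    set a := (Finset.univ.filter P).min' hTne with ha
    have hPa : P a := by
      have := (Finset.univ.filter P).min'_mem hTne
      simpa using this
    have hmin : ∀ b : Fin q, b < a → ¬ P b := by
      intro b hb hPb
      have : a ≤ b := Finset.min'_le _ b (by simp [hPb])
      omega
    have hud1 : u.val.length + 1 ≤ d := by omega
    set w' : QV q d := ⟨u.val ++ [a], by simpa using hud1⟩ with hw'
    have hswap_left : ∀ (b : Fin q) (x : QV q d), x.val = u.val ++ [b] →
        swapAt u v x = ⟨v.val ++ [b], by simpa using hd1⟩ := by
      intro b x hx
      apply Subtype.ext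
      rw [swapAt_val_of_left u v hlen x ⟨[b], hx.symm⟩, hx, List.drop_left]
    refine ⟨w', ?_, hchu w' ⟨a, rfl⟩, ?_⟩
    · rw [mem_treeswap, hswap_left a w' rfl]; exact hPa
    · intro w hw
      have hwlen : w'.val.length = u.val.length + 1 := by simp [hw']
      by_cases hdu : u.val <+: w.val
      · rcases hw with hw | ⟨hw1, hw2⟩
        · -- w = u
          have hwu : w.val = u.val := (hdu.eq_of_length (by
            have := hdu.length_le; omega)).symm
          have : swapAt u v w = v := by
            apply Subtype.ext
            rw [swapAt_val_of_left u v hlen w (hwu ▸ List.prefix_refl _)]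
            simp [hwu]
          rw [mem_treeswap, this]
          constructor
          · intro h'; exact absurd h' hvS
          · intro h'; exact absurd ((Subtype.ext hwu : w = u) ▸ h') huS
        · -- w = u ++ [b], b < a
          obtain ⟨t, ht⟩ := hdu
          have htlen : t.length = 1 := by
            have := congrArg List.length ht
            simp at this; omega
          obtain ⟨b, rfl⟩ := List.length_eq_one_iff.mp htlen
          have hba : b < a := by
            rw [← ht] at hw2
            rw [hwlen] at hw1
            exact (lex_append_same u.val b a).mp hw2
          rw [mem_treeswap, hswap_left b w ht.symm]
          constructor
          · intro h'; exact absurd h' (hmin b hba)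
          · intro h'; exact absurd h' (hchu w ⟨b, ht.symm⟩)
      · by_cases hdv : v.val <+: w.val
        · rcases hw with hw | ⟨hw1, hw2⟩
          · -- w = v
            have hwv : w.val = v.val := (hdv.eq_of_length (by
              have := hdv.length_le; omega)).symm
            have : swapAt u v w = u := by
              apply Subtype.ext
              rw [swapAt_val_of_right u v hlen hne w (hwv ▸ List.prefix_refl _)]
              simp [hwv]
            rw [mem_treeswap, this]
            constructor
            · intro h'; exact absurd h' huS
            · intro h'; exact absurd ((Subtype.ext hwv : w = v) ▸ h') hvS
          · -- w = v ++ [b]: contradiction with lex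
            obtain ⟨t, ht⟩ := hdv
            exact absurd hw2 (fun h2 => lex_asymm h2 (by
              rw [← ht, hw']
              exact lex_append_of_lex hlex hlen [a] t))
        · rw [mem_treeswap, swapAt_of_neither u v w hdu hdv]

end Main
end QV
lemma exists_swappable_of_setPrec {q d : ℕ} (S : Set (QV q d))
    (hU : ∃ U : Set (QV q d), QV.SetPrec U S) :
    ∃ u v : QV q d, QV.Swappable S u v := by
  obtain ⟨U, hcards, v0, hv0U, hv0S, hpre⟩ := hU
  set i0 := v0.val.length with hi0
  have hA := hcards i0
  have hnsub : ¬ (S ∩ QV.level q d i0) ⊆ (U ∩ QV.level q d i0) := by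
    intro hsub
    have heq : S ∩ QV.level q d i0 = U ∩ QV.level q d i0 :=
      Set.eq_of_subset_of_ncard_le hsub (le_of_eq hA) (Set.toFinite _)
    have : v0 ∈ S ∩ QV.level q d i0 := heq.symm ▸ ⟨hv0U, rfl⟩
    exact hv0S this.1
  obtain ⟨x, hxS, hxU⟩ := Set.not_subset.mp hnsub
  have hxlev : x.val.length = i0 := hxS.2
  have hxnU : x ∉ U := fun h => hxU ⟨h, hxlev⟩
  have hnp : ¬ QV.Precedes x v0 := fun hp => hxnU ((hpre x hp).mpr hxS.1)
  have hxne : x.val ≠ v0.val := by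
    intro h
    exact hv0S ((Subtype.ext h : x = v0) ▸ hxS.1)
  have hlex : List.Lex (· < ·) v0.val x.val := by
    rcases trichotomous_of (List.Lex (· < ·)) x.val v0.val with h | h | h
    · exact absurd (Or.inr ⟨by omega, h⟩) hnp
    · exact absurd h hxne
    · exact h
  exact ⟨v0, x, ⟨by omega, hlex⟩, Or.inl ⟨hv0S, hxS.1⟩⟩

theorem exists_swappable_treeswap_decreases (q d : ℕ) (hq : 2 ≤ q) (hd : 1 ≤ d)
    (S : Set (QV q d)) (hU : ∃ U : Set (QV q d), QV.SetPrec U S) :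
    (∃ u v : QV q d, QV.Swappable S u v) ∧
    ∃ (u v : QV q d) (i : ℕ), u ∈ QV.level q d i ∧ v ∈ QV.level q d i ∧
      QV.Swappable S u v ∧
      (∀ j < i, QV.LevelLeftOrdered S j) ∧
      QV.SetPrec (QV.treeswap S u v) S := by
  obtain ⟨u0, v0, hsw0⟩ := exists_swappable_of_setPrec S hU
  refine ⟨⟨u0, v0, hsw0⟩, ?_⟩
  classical
  have hex : ∃ i, ¬ QV.LevelLeftOrdered S i :=
    ⟨u0.val.length, fun h => h u0 v0 rfl hsw0⟩
  set i := Nat.find hex with hi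
  have hspec := Nat.find_spec hex
  rw [QV.LevelLeftOrdered] at hspec
  push_neg at hspec
  obtain ⟨u, v, hulen, hsw⟩ := hspec
  refine ⟨u, v, i, hulen, ?_, hsw, ?_, QV.setPrec_treeswap S u v hsw⟩
  · show v.val.length = i
    rw [← hsw.1.1, hulen]
  · intro j hj
    exact not_not.mp (Nat.find_min hex hj)
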